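/- The neutralized local entropy is f-invariant almost everywhere: for a bi-Lipschitz diffeomorphism f of a compact metric space and an f-invariant Borel probability measure μ, the function E_μ(x) := lim_{r→0} limsup_{n→∞} (−1/n) log μ(B(x,n,e^{−rn})) satisfies E_μ(f(x)) = E_μ(x) for every x (where the limit in r exists by monotonicity). -/

import Mathlib

open Filter MeasureTheory

/-- The Bowen ball `B(x, n, ε)`. -/
def bowen {M : Type*} [PseudoMetricSpace M] (f : M → M) (x : M) (n : ℕ) (ε : ℝ) : Set M :=
  {y | ∀ i ≤ n, dist (f^[i] x) (f^[i] y) ≤ ε}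

/-- `limsup_{n → ∞} (-1/n) log μ(B(x, n, e^{-rn}))`, as an extended real. -/
noncomputable def nlRate {M : Type*} [PseudoMetricSpace M] [MeasurableSpace M]
    (μ : Measure M) (f : M → M) (x : M) (r : ℝ) : EReal :=
  limsup (fun n : ℕ =>
    (((-1 : ℝ) / n * Real.log (μ (bowen f x n (Real.exp (-r * n)))).toReal : ℝ) : EReal)) atTop

/-- The neutralized local entropy: the inner limsup is nondecreasing in `r`,
so the limit as `r → 0⁺` exists and equals the infimum over `r > 0`. -/
noncomputable def nlEnt {M : Type*} [PseudoMetricSpace M] [MeasurableSpace M]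
    (μ : Measure M) (f : M → M) (x : M) : EReal :=
  ⨅ (r : ℝ) (_ : 0 < r), nlRate μ f x r

lemma bowen_mono {M : Type*} [PseudoMetricSpace M] {f : M → M} {x : M} {m n : ℕ} {ε δ : ℝ}
    (hmn : m ≤ n) (hεδ : δ ≤ ε) : bowen f x n δ ⊆ bowen f x m ε := fun _ hy i hi =>
  le_trans (hy i (hi.trans hmn)) hεδ

lemma isClosed_bowen {M : Type*} [MetricSpace M] {f : M → M} (hf : Continuous f)
    (x : M) (n : ℕ) (ε : ℝ) : IsClosed (bowen f x n ε) := by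
  have h : bowen f x n ε = ⋂ i ∈ Set.Iic n, {y | dist (f^[i] x) (f^[i] y) ≤ ε} := by
    ext y; simp [bowen, Set.mem_iInter]
  rw [h]
  exact isClosed_biInter fun i _ =>
    isClosed_le (continuous_const.dist (hf.iterate i)) continuous_const

lemma toReal_le_one' {M : Type*} [MeasurableSpace M] (μ : Measure M) [IsProbabilityMeasure μ]
    (s : Set M) : (μ s).toReal ≤ 1 := by
  calc (μ s).toReal ≤ (1 : ENNReal).toReal := ENNReal.toReal_mono ENNReal.one_ne_top prob_le_one
    _ = 1 := by simp

/-- `-log μ(B(z, n, e^{-rn}))`, the numerator of the entropy quotient. -/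
noncomputable def nlB {M : Type*} [PseudoMetricSpace M] [MeasurableSpace M]
    (μ : Measure M) (f : M → M) (z : M) (r : ℝ) (n : ℕ) : ℝ :=
  - Real.log (μ (bowen f z n (Real.exp (-r * n)))).toReal

lemma nlTerm_nonneg {M : Type*} [MeasurableSpace M] (μ : Measure M) [IsProbabilityMeasure μ]
    (s : Set M) : 0 ≤ - Real.log (μ s).toReal := by
  have := Real.log_nonpos ENNReal.toReal_nonneg (toReal_le_one' μ s)
  linarith

lemma nlB_nonneg {M : Type*} [PseudoMetricSpace M] [MeasurableSpace M]
    (μ : Measure M) [IsProbabilityMeasure μ] (f : M → M) (z : M) (r : ℝ) (n : ℕ) :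
    0 ≤ nlB μ f z r n := nlTerm_nonneg μ _

lemma nlRate_eq {M : Type*} [PseudoMetricSpace M] [MeasurableSpace M]
    (μ : Measure M) (f : M → M) (z : M) (r : ℝ) :
    nlRate μ f z r = limsup (fun n : ℕ => ((nlB μ f z r n / n : ℝ) : EReal)) atTop := by
  unfold nlRate
  congr 1
  funext n
  congr 1
  unfold nlB
  ring

lemma nlRate_nonneg {M : Type*} [PseudoMetricSpace M] [MeasurableSpace M]
    (μ : Measure M) [IsProbabilityMeasure μ] (f : M → M) (x : M) (r : ℝ) :
    (0 : EReal) ≤ nlRate μ f x r := by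
  rw [nlRate_eq]
  apply le_limsup_of_frequently_le' (Frequently.of_forall ?_)
  intro n
  rw [show ((0:EReal)) = ((0:ℝ) : EReal) by simp, EReal.coe_le_coe_iff]
  exact div_nonneg (nlB_nonneg μ f x r n) (Nat.cast_nonneg n)

lemma nlEnt_nonneg {M : Type*} [PseudoMetricSpace M] [MeasurableSpace M]
    (μ : Measure M) [IsProbabilityMeasure μ] (f : M → M) (x : M) :
    (0 : EReal) ≤ nlEnt μ f x :=
  le_iInf fun r => le_iInf fun _ => nlRate_nonneg μ f x r

/-- `limsup b_{n+1}/n ≤ limsup b_n/n` for nonnegative `b`. -/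
lemma limsup_shift_le (b : ℕ → ℝ) (hb : ∀ n, 0 ≤ b n) :
    limsup (fun n : ℕ => ((b (n+1) / n : ℝ) : EReal)) atTop ≤
    limsup (fun n : ℕ => ((b n / n : ℝ) : EReal)) atTop := by
  set S := limsup (fun n : ℕ => ((b n / n : ℝ) : EReal)) atTop with hS
  have hS0 : (0:EReal) ≤ S := by
    apply le_limsup_of_frequently_le' (Frequently.of_forall ?_)
    intro n
    rw [show ((0:EReal)) = ((0:ℝ) : EReal) by simp, EReal.coe_le_coe_iff]
    exact div_nonneg (hb n) (Nat.cast_nonneg n)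
  refine le_of_forall_gt_imp_ge_of_dense fun c hc => ?_
  induction c using EReal.rec with
  | bot => exact absurd (hS0.trans_lt hc) (by simp)
  | top => exact le_top
  | coe c =>
    obtain ⟨t, hSt, htc⟩ := EReal.exists_between_coe_real hc
    have ht0 : (0:ℝ) < t := by
      have : (0:EReal) < (t:EReal) := lt_of_le_of_lt hS0 hSt
      exact_mod_cast this
    have htc' : t < c := by exact_mod_cast htc
    have hev : ∀ᶠ n in atTop, b n / (n:ℝ) < t := by
      have h1 := eventually_lt_of_limsup_lt hSt
      filter_upwards [h1] with n hn
      exact_mod_cast hn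
    obtain ⟨N, hN⟩ := eventually_atTop.mp hev
    apply limsup_le_of_le (by isBoundedDefault)
    have hNn : ∀ᶠ n : ℕ in atTop, N ≤ n + 1 ∧ 1 ≤ n ∧ t / (c - t) ≤ n := by
      filter_upwards [eventually_ge_atTop N, eventually_ge_atTop 1,
        eventually_ge_atTop ⌈t / (c - t)⌉₊] with n h1 h2 h3
      exact ⟨le_trans h1 (Nat.le_succ n), h2, le_trans (Nat.le_ceil _) (by exact_mod_cast h3)⟩
    filter_upwards [hNn] with n hn
    obtain ⟨h1, h2, h3⟩ := hn
    rw [EReal.coe_le_coe_iff]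
    have hn0 : (0:ℝ) < n := by exact_mod_cast h2
    have hb1 : b (n+1) < t * ((n:ℝ)+1) := by
      have h4 := hN (n+1) h1
      have hpos : (0:ℝ) < ((n:ℝ)+1) := by positivity
      rw [div_lt_iff₀ (by exact_mod_cast hpos : (0:ℝ) < ((n+1:ℕ):ℝ))] at h4
      push_cast at h4
      linarith
    have hkey : t * ((n:ℝ)+1) ≤ c * n := by
      rw [div_le_iff₀ (sub_pos.mpr htc')] at h3
      nlinarith
    rw [div_le_iff₀ hn0]
    linarith

theorem stmt2 {M : Type*} [MetricSpace M] [CompactSpace M] [MeasurableSpace M] [BorelSpace M]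
    (f g : M → M) (L : NNReal) (hL : 1 ≤ L)
    (hf : LipschitzWith L f) (hg : LipschitzWith L g)
    (hgf : Function.LeftInverse g f) (hfg : Function.RightInverse g f)
    (μ : Measure M) [IsProbabilityMeasure μ] (hinv : MeasurePreserving f μ μ) :
    ∀ x : M, nlEnt μ f (f x) = nlEnt μ f x := by
  intro x
  have hfc : Continuous f := hf.continuous
  have hgc : Continuous g := hg.continuous
  have hL1 : (1:ℝ) ≤ (L:ℝ) := by exact_mod_cast hL
  have hLpos : (0:ℝ) < (L:ℝ) := lt_of_lt_of_le one_pos hL1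
  -- g is measure preserving
  have hgpres : MeasurePreserving g μ μ := by
    refine ⟨hgc.measurable, ?_⟩
    conv_lhs => rw [← hinv.map_eq]
    rw [Measure.map_map hgc.measurable hinv.measurable,
      show g ∘ f = id from funext hgf, Measure.map_id]
  -- the two measure comparison lemmas
  have hA : ∀ (z : M) (n : ℕ) (ε : ℝ), μ (bowen f z (n+1) ε) ≤ μ (bowen f (f z) n ε) := by
    intro z n ε
    have hsub : bowen f z (n+1) ε ⊆ f ⁻¹' bowen f (f z) n ε := by
      intro y hy i hi
      rw [← Function.iterate_succ_apply, ← Function.iterate_succ_apply]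
      exact hy (i+1) (by omega)
    calc μ (bowen f z (n+1) ε) ≤ μ (f ⁻¹' bowen f (f z) n ε) := measure_mono hsub
      _ = μ (bowen f (f z) n ε) :=
        hinv.measure_preimage (isClosed_bowen hfc _ _ _).measurableSet.nullMeasurableSet
  have hB : ∀ (z : M) (n : ℕ) (ε : ℝ),
      μ (bowen f (f z) n ε) ≤ μ (bowen f z (n+1) ((L:ℝ) * ε)) := by
    intro z n ε
    have hsub : bowen f (f z) n ε ⊆ g ⁻¹' bowen f z (n+1) ((L:ℝ) * ε) := by
      intro y hy
      have hε : 0 ≤ ε := le_trans dist_nonneg (hy 0 (Nat.zero_le _))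
      intro i hi
      match i with
      | 0 =>
        simp only [Function.iterate_zero, id_eq]
        calc dist z (g y) = dist (g (f z)) (g y) := by rw [hgf z]
          _ ≤ (L:ℝ) * dist (f z) y := hg.dist_le_mul _ _
          _ ≤ (L:ℝ) * ε := by
              have h0 := hy 0 (Nat.zero_le _)
              simp only [Function.iterate_zero, id_eq] at h0
              exact mul_le_mul_of_nonneg_left h0 (le_of_lt hLpos)
      | (j+1) =>
        have h1 : f^[j+1] (g y) = f^[j] y := by
          rw [Function.iterate_succ_apply, hfg y]
        rw [h1, Function.iterate_succ_apply]
        calc dist (f^[j] (f z)) (f^[j] y) ≤ ε := hy j (by omega)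
          _ ≤ (L:ℝ) * ε := le_mul_of_one_le_left hε hL1
    calc μ (bowen f (f z) n ε) ≤ μ (g ⁻¹' bowen f z (n+1) ((L:ℝ) * ε)) := measure_mono hsub
      _ = μ (bowen f z (n+1) ((L:ℝ) * ε)) :=
        hgpres.measure_preimage (isClosed_bowen hfc _ _ _).measurableSet.nullMeasurableSet
  by_cases hpos : ∀ r > 0, ∀ n, 0 < μ (bowen f x n (Real.exp (-r * n)))
  · -- nondegenerate case
    have hle : ∀ r > 0, nlRate μ f (f x) r ≤ nlRate μ f x r := by
      intro r hr
      have key : ∀ n : ℕ, nlB μ f (f x) r n ≤ nlB μ f x r (n+1) := by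
        intro n
        have hμ1 : μ (bowen f x (n+1) (Real.exp (-r * ((n:ℝ)+1)))) ≤
            μ (bowen f (f x) n (Real.exp (-r * n))) := by
          refine le_trans (measure_mono (bowen_mono le_rfl ?_)) (hA x n _)
          apply Real.exp_le_exp.2
          nlinarith [Nat.cast_nonneg (α := ℝ) n]
        have hp : 0 < μ (bowen f x (n+1) (Real.exp (-r * ((n:ℝ)+1)))) := by
          have := hpos r hr (n+1)
          push_cast at this
          exact this
        have hp' : 0 < (μ (bowen f x (n+1) (Real.exp (-r * ((n:ℝ)+1))))).toReal :=
          ENNReal.toReal_pos hp.ne' (measure_ne_top μ _)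
        have hmono : (μ (bowen f x (n+1) (Real.exp (-r * ((n:ℝ)+1))))).toReal ≤
            (μ (bowen f (f x) n (Real.exp (-r * n)))).toReal :=
          ENNReal.toReal_mono (measure_ne_top μ _) hμ1
        have hlog := Real.log_le_log hp' hmono
        unfold nlB
        push_cast
        linarith
      rw [nlRate_eq, nlRate_eq]
      calc limsup (fun n : ℕ => ((nlB μ f (f x) r n / n : ℝ) : EReal)) atTop
          ≤ limsup (fun n : ℕ => ((nlB μ f x r (n+1) / n : ℝ) : EReal)) atTop := by
            apply limsup_le_limsup
            · filter_upwards [eventually_ge_atTop 1] with n h1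
              rw [EReal.coe_le_coe_iff]
              have hn0 : (0:ℝ) < n := by exact_mod_cast h1
              exact div_le_div_of_nonneg_right (key n) hn0.le
            all_goals isBoundedDefault
        _ ≤ limsup (fun n : ℕ => ((nlB μ f x r n / n : ℝ) : EReal)) atTop :=
            limsup_shift_le _ (nlB_nonneg μ f x r)
    have hge : ∀ r > 0, nlRate μ f x (r/2) ≤ nlRate μ f (f x) r := by
      intro r hr
      have key : ∀ᶠ n : ℕ in atTop,
          nlB μ f x (r/2) (n+1) / ((n:ℝ)+1) ≤ nlB μ f (f x) r n / n := by
        have hcond : ∀ᶠ n : ℕ in atTop,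
            (L:ℝ) * Real.exp (-r * n) ≤ Real.exp (-(r/2) * ((n:ℝ)+1)) := by
          filter_upwards [eventually_ge_atTop ⌈(Real.log L + r/2) / (r/2)⌉₊] with n hn
          have hn' : (Real.log L + r/2) / (r/2) ≤ (n:ℝ) :=
            le_trans (Nat.le_ceil _) (by exact_mod_cast hn)
          rw [div_le_iff₀ (by linarith : (0:ℝ) < r/2)] at hn'
          rw [show (L:ℝ) * Real.exp (-r * n) = Real.exp (Real.log L + (-r * n)) by
            rw [Real.exp_add, Real.exp_log hLpos]]
          apply Real.exp_le_exp.2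
          nlinarith [Nat.cast_nonneg (α := ℝ) n]
        filter_upwards [hcond, eventually_ge_atTop 1] with n hc h1
        have hμchain : μ (bowen f (f x) n (Real.exp (-r * n))) ≤
            μ (bowen f x (n+1) (Real.exp (-(r/2) * ((n:ℝ)+1)))) :=
          le_trans (hB x n _) (measure_mono (bowen_mono le_rfl hc))
        have hp : 0 < μ (bowen f (f x) n (Real.exp (-r * n))) := by
          have h5 : μ (bowen f x (n+1) (Real.exp (-r * ((n:ℝ)+1)))) ≤
              μ (bowen f (f x) n (Real.exp (-r * n))) := by
            refine le_trans (measure_mono (bowen_mono le_rfl ?_)) (hA x n _)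
            apply Real.exp_le_exp.2
            nlinarith [Nat.cast_nonneg (α := ℝ) n]
          have h6 := hpos r hr (n+1)
          push_cast at h6
          exact lt_of_lt_of_le h6 h5
        have hp' : 0 < (μ (bowen f (f x) n (Real.exp (-r * n)))).toReal :=
          ENNReal.toReal_pos hp.ne' (measure_ne_top μ _)
        have hmono : (μ (bowen f (f x) n (Real.exp (-r * n)))).toReal ≤
            (μ (bowen f x (n+1) (Real.exp (-(r/2) * ((n:ℝ)+1))))).toReal :=
          ENNReal.toReal_mono (measure_ne_top μ _) hμchain
        have hlog := Real.log_le_log hp' hmono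
        have hbb : nlB μ f x (r/2) (n+1) ≤ nlB μ f (f x) r n := by
          unfold nlB
          push_cast
          linarith
        have hn0 : (0:ℝ) < n := by exact_mod_cast h1
        have hnn := nlB_nonneg μ f x (r/2) (n+1)
        calc nlB μ f x (r/2) (n+1) / ((n:ℝ)+1) ≤ nlB μ f x (r/2) (n+1) / n := by
              gcongr
              linarith
          _ ≤ nlB μ f (f x) r n / n := by gcongr
      rw [nlRate_eq, nlRate_eq]
      have hshift : limsup (fun n : ℕ => ((nlB μ f x (r/2) n / n : ℝ) : EReal)) atTop
          = limsup (fun n : ℕ =>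
              ((nlB μ f x (r/2) (n+1) / ((n:ℝ)+1) : ℝ) : EReal)) atTop := by
        rw [← limsup_nat_add (fun n : ℕ => ((nlB μ f x (r/2) n / n : ℝ) : EReal)) 1]
        congr 1
        funext n
        congr 1
        push_cast
        ring
      rw [hshift]
      apply limsup_le_limsup
      · filter_upwards [key] with n hn
        exact EReal.coe_le_coe_iff.2 hn
      all_goals isBoundedDefault
    apply le_antisymm
    · exact le_iInf fun r => le_iInf fun hr => le_trans (iInf₂_le r hr) (hle r hr)
    · refine le_iInf fun r => le_iInf fun hr => ?_
      exact le_trans (iInf₂_le (r/2) (by linarith)) (hge r hr)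
  · -- degenerate case: some Bowen ball of x has measure zero
    push_neg at hpos
    obtain ⟨r, hr, N, hN⟩ := hpos
    rw [le_zero_iff] at hN
    have hzero : ∀ n, N ≤ n → μ (bowen f x n (Real.exp (-r * n))) = 0 := by
      intro n hn
      refine le_antisymm (le_trans (measure_mono (bowen_mono hn ?_)) hN.le) zero_le
      apply Real.exp_le_exp.2
      have h : (N:ℝ) ≤ n := by exact_mod_cast hn
      nlinarith
    have hxrate : nlRate μ f x r = 0 := by
      refine le_antisymm ?_ (nlRate_nonneg μ f x r)
      unfold nlRate
      apply limsup_le_of_le (by isBoundedDefault)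
      filter_upwards [eventually_ge_atTop N] with n hn
      rw [hzero n hn]
      simp
    have hfzero : ∀ᶠ n : ℕ in atTop, μ (bowen f (f x) n (Real.exp (-(r+1) * n))) = 0 := by
      filter_upwards [eventually_ge_atTop N, eventually_ge_atTop ⌈Real.log L + r * N⌉₊]
        with n hn hn2
      refine le_antisymm ?_ zero_le
      refine le_trans (hB x n _)
        (le_trans (measure_mono (bowen_mono (hn.trans (Nat.le_succ n)) ?_)) hN.le)
      rw [show (L:ℝ) * Real.exp (-(r+1) * n) = Real.exp (Real.log L + (-(r+1) * n)) by
        rw [Real.exp_add, Real.exp_log hLpos]]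
      apply Real.exp_le_exp.2
      have h7 : Real.log L + r * N ≤ (n:ℝ) := le_trans (Nat.le_ceil _) (by exact_mod_cast hn2)
      nlinarith [Nat.cast_nonneg (α := ℝ) n, mul_nonneg hr.le (Nat.cast_nonneg (α := ℝ) n)]
    have hfxrate : nlRate μ f (f x) (r+1) = 0 := by
      refine le_antisymm ?_ (nlRate_nonneg μ f (f x) (r+1))
      unfold nlRate
      apply limsup_le_of_le (by isBoundedDefault)
      filter_upwards [hfzero] with n hn
      rw [hn]
      simp
    have h1 : nlEnt μ f x = 0 :=
      le_antisymm (le_trans (iInf₂_le r hr) hxrate.le) (nlEnt_nonneg μ f x)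
    have h2 : nlEnt μ f (f x) = 0 :=
      le_antisymm (le_trans (iInf₂_le (r+1) (by linarith)) hfxrate.le) (nlEnt_nonneg μ f (f x))
    rw [h1, h2]
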